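/- R₂ is a monomial ring: if v₁,...,v_k are formally distinct nonzero monomials in s, t and n₁v₁ + ... + n_kv_k = 0 in R₂ with integer coefficients n_i, then n_i = 0 for all i. In particular R₂ is torsion-free as an additive group. -/

import Mathlib

/-!
The tree-indexed vector space `V` over `ℚ` with basis the free monoid on two letters
(encoded as `List Bool`, with `false` the letter `0` and `true` the letter `1`).
The recursive matrices `s = [[0,0],[1,0]]` and `t = [[0,t],[0,s]]` of the ring `R₂`
act on the decomposition `V = ℚ·φ ⊕ 0V ⊕ 1V` by the block-matrix recursion.
-/

noncomputable section

abbrev V : Type := List Bool →₀ ℚ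

/-- Prefixing by a letter: the embedding `V → yV`. -/
def pre (b : Bool) : V →ₗ[ℚ] V := Finsupp.lmapDomain ℚ ℚ (List.cons b)

/-- Value of `s = [[0,0],[1,0]]` on a basis word. -/
def Sfun : List Bool → V
  | [] => 0
  | false :: u => Finsupp.single (true :: u) 1
  | true :: _ => 0

/-- Value of `t = [[0,t],[0,s]]` on a basis word, by recursion. -/
def Tfun : List Bool → V
  | [] => 0
  | false :: _ => 0
  | true :: u => pre false (Tfun u) + pre true (Sfun u)

/-- The generator `s` of `R₂`. -/
def sR : Module.End ℚ V := Finsupp.linearCombination ℚ Sfun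

/-- The generator `t` of `R₂`. -/
def tR : Module.End ℚ V := Finsupp.linearCombination ℚ Tfun

/-- The level-preserving operator with block form `[[e,0,0],[0,A,B],[0,C,D]]` on
`V = ℚ·φ ⊕ 0V ⊕ 1V`, written `e ⊕ [[A,B],[C,D]]`. -/
def blk (e : ℚ) (A B C D : Module.End ℚ V) : Module.End ℚ V :=
  Finsupp.linearCombination ℚ (fun w => match w with
    | [] => Finsupp.single ([] : List Bool) e
    | false :: u => pre false (A (Finsupp.single u 1)) + pre true (C (Finsupp.single u 1))
    | true :: u => pre false (B (Finsupp.single u 1)) + pre true (D (Finsupp.single u 1)))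

/-- The monomial in `s, t` given by a word (`false ↦ s`, `true ↦ t`). -/
def mono (w : List Bool) : Module.End ℚ V :=
  (w.map (fun b => if b then tR else sR)).prod

/-- The ring `R₂` generated by `s` and `t` (a non-unital subring of `End ℚ V`). -/
def R2 : NonUnitalSubring (Module.End ℚ V) := NonUnitalSubring.closure {sR, tR}

end

noncomputable section

/-! ### Auxiliary combinatorics: the generators act as partial injections on basis words -/

/-- The partial map on basis words induced by `s`. -/
def sF : List Bool → Option (List Bool)
  | false :: u => some (true :: u)
  | _ => none

/-- The partial map on basis words induced by `t`. -/
def tF : List Bool → Option (List Bool)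
  | true :: false :: u => some (true :: true :: u)
  | true :: true :: u => (tF (true :: u)).map (List.cons false)
  | _ => none

def opF (a : Bool) : List Bool → Option (List Bool) := if a then tF else sF

/-- The partial map on basis words induced by the monomial `mono w`. -/
def F : List Bool → List Bool → Option (List Bool)
  | [], u => some u
  | a :: w, u => (F w u).bind (opF a)

def toV : Option (List Bool) → V
  | none => 0
  | some z => Finsupp.single z 1

theorem pre_single (b : Bool) (z : List Bool) :
    pre b (Finsupp.single z (1:ℚ)) = Finsupp.single (b :: z) 1 := by
  simp [pre, Finsupp.lmapDomain_apply, Finsupp.mapDomain_single]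

theorem Sfun_eq (u : List Bool) : Sfun u = toV (sF u) := by
  match u with
  | [] => simp [Sfun, sF, toV]
  | false :: v => simp [Sfun, sF, toV]
  | true :: v => simp [Sfun, sF, toV]

theorem Tfun_eq : ∀ u : List Bool, Tfun u = toV (tF u)
  | [] => by simp [Tfun, tF, toV]
  | false :: v => by simp [Tfun, tF, toV]
  | true :: [] => by simp [Tfun, tF, toV, Sfun]
  | true :: false :: v => by
      simp [Tfun, tF, toV, Sfun, pre_single]
  | true :: true :: v => by
      have ih := Tfun_eq (true :: v)
      show pre false (Tfun (true :: v)) + pre true (Sfun (true :: v)) = _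
      rw [ih]
      cases h : tF (true :: v) with
      | none => simp [tF, h, toV, Sfun]
      | some y => simp [tF, h, toV, Sfun, pre_single]

/-- The binary value of a word (first letter least significant). -/
def val : List Bool → ℕ
  | [] => 0
  | b :: u => (if b then 1 else 0) + 2 * val u

theorem sF_shape {u z : List Bool} (h : sF u = some z) :
    ∃ v, u = false :: v ∧ z = true :: v := by
  match u with
  | [] => simp [sF] at h
  | true :: v => simp [sF] at h
  | false :: v => simp [sF] at h; exact ⟨v, rfl, h.symm⟩

theorem tF_shape {u z : List Bool} (h : tF u = some z) : ∃ v, u = true :: v := by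
  match u with
  | [] => simp [tF] at h
  | false :: v => simp [tF] at h
  | true :: v => exact ⟨v, rfl⟩

theorem sF_lt {u z : List Bool} (h : sF u = some z) : val u < val z := by
  obtain ⟨v, rfl, rfl⟩ := sF_shape h
  simp [val]

theorem tF_lt : ∀ u z : List Bool, tF u = some z → val u < val z
  | true :: false :: v, z, h => by
      simp [tF] at h; subst h; simp [val]
  | true :: true :: v, z, h => by
      rw [show tF (true :: true :: v) = (tF (true :: v)).map (List.cons false) from rfl] at h
      rw [Option.map_eq_some_iff] at h
      obtain ⟨y, hy, rfl⟩ := h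
      have := tF_lt (true :: v) y hy
      simp [val] at this ⊢
      omega
  | [], z, h => by simp [tF] at h
  | [true], z, h => by simp [tF] at h
  | false :: v, z, h => by simp [tF] at h

/-- The forward dynamics is deterministic: at most one generator applies to a word. -/
def G : List Bool → Option (List Bool)
  | false :: v => some (true :: v)
  | u => tF u

theorem sF_G {u z : List Bool} (h : sF u = some z) : G u = some z := by
  obtain ⟨v, rfl, rfl⟩ := sF_shape h
  rfl

theorem tF_G {u z : List Bool} (h : tF u = some z) : G u = some z := by
  obtain ⟨v, rfl⟩ := tF_shape h
  rw [← h]; rfl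

theorem opF_G {a : Bool} {u z : List Bool} (h : opF a u = some z) : G u = some z := by
  cases a
  · exact sF_G h
  · exact tF_G h

theorem G_lt {u z : List Bool} (h : G u = some z) : val u < val z := by
  match u with
  | false :: v => rw [show G (false::v) = some (true::v) from rfl] at h
                  cases h; simp [val]
  | [] => exact tF_lt _ _ h
  | true :: v => exact tF_lt _ _ h

def Giter : ℕ → List Bool → Option (List Bool)
  | 0, u => some u
  | n+1, u => (Giter n u).bind G

theorem Giter_add (k m : ℕ) (u : List Bool) :
    Giter (m + k) u = (Giter m u).bind (Giter k) := by
  induction k with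
  | zero => show Giter m u = _ ; cases Giter m u <;> rfl
  | succ k ih =>
      show (Giter (m+k) u).bind G = _
      rw [ih]
      cases Giter m u with
      | none => rfl
      | some y => rfl

theorem Giter_lt : ∀ (m : ℕ) (u z : List Bool), 0 < m → Giter m u = some z → val u < val z := by
  intro m
  induction m with
  | zero => omega
  | succ m ih =>
      intro u z _ h
      rw [show Giter (m+1) u = (Giter m u).bind G from rfl, Option.bind_eq_some_iff] at h
      obtain ⟨y, hy, hG⟩ := h
      rcases Nat.eq_zero_or_pos m with rfl | hm
      · cases hy; exact G_lt hG
      · exact lt_trans (ih u y hm hy) (G_lt hG)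

theorem Giter_inj {m m' : ℕ} {u z : List Bool}
    (h : Giter m u = some z) (h' : Giter m' u = some z) : m = m' := by
  rcases le_total m m' with hle | hle
  · obtain ⟨k, rfl⟩ := Nat.le.dest hle
    rw [Giter_add, h] at h'
    rcases Nat.eq_zero_or_pos k with rfl | hk
    · omega
    · exact absurd (Giter_lt k z z hk h') (lt_irrefl _)
  · obtain ⟨k, rfl⟩ := Nat.le.dest hle
    rw [Giter_add, h'] at h
    rcases Nat.eq_zero_or_pos k with rfl | hk
    · omega
    · exact absurd (Giter_lt k z z hk h) (lt_irrefl _)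

theorem F_giter : ∀ (w : List Bool) (u z : List Bool), F w u = some z →
    Giter w.length u = some z := by
  intro w
  induction w with
  | nil => intro u z h; cases h; rfl
  | cons a w ih =>
      intro u z h
      rw [show F (a :: w) u = (F w u).bind (opF a) from rfl, Option.bind_eq_some_iff] at h
      obtain ⟨y, hy, hop⟩ := h
      rw [show (a :: w).length = w.length + 1 from rfl,
          show Giter (w.length + 1) u = (Giter w.length u).bind G from rfl,
          ih u y hy]
      exact opF_G hop

theorem opF_det {a a' : Bool} {y z z' : List Bool}
    (h : opF a y = some z) (h' : opF a' y = some z') : a = a' := by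
  cases a <;> cases a'
  · rfl
  · obtain ⟨v, rfl, -⟩ := sF_shape h
    obtain ⟨v', hv⟩ := tF_shape h'
    simp at hv
  · obtain ⟨v, rfl, -⟩ := sF_shape h'
    obtain ⟨v', hv⟩ := tF_shape h
    simp at hv
  · rfl

/-- Key injectivity: a pair (input, output) determines the monomial word. -/
theorem F_word_inj : ∀ (w w' u z : List Bool), F w u = some z → F w' u = some z → w = w' := by
  intro w
  induction w with
  | nil =>
      intro w' u z h h'
      cases h
      have h1 : Giter 0 u = some u := rfl
      have h2 := F_giter w' u u h'
      have := Giter_inj h1 h2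
      cases w' with
      | nil => rfl
      | cons a r => simp at this
  | cons a r ih =>
      intro w' u z h h'
      cases w' with
      | nil =>
          cases h'
          have h1 : Giter 0 u = some u := rfl
          have h2 := F_giter (a :: r) u u h
          have := Giter_inj h2 h1
          simp at this
      | cons a' r' =>
          rw [show F (a :: r) u = (F r u).bind (opF a) from rfl, Option.bind_eq_some_iff] at h
          rw [show F (a' :: r') u = (F r' u).bind (opF a') from rfl, Option.bind_eq_some_iff] at h'
          obtain ⟨y, hy, hop⟩ := h
          obtain ⟨y', hy', hop'⟩ := h'
          have hlen : r.length = r'.length := by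
            have h2 := F_giter (a :: r) u z (by
              rw [show F (a :: r) u = (F r u).bind (opF a) from rfl, hy]; exact hop)
            have h2' := F_giter (a' :: r') u z (by
              rw [show F (a' :: r') u = (F r' u).bind (opF a') from rfl, hy']; exact hop')
            have := Giter_inj h2 h2'
            simpa using this
          have hyy : y = y' := by
            have g1 := F_giter r u y hy
            have g2 := F_giter r' u y' hy'
            rw [← hlen] at g2
            rw [g1] at g2
            exact (Option.some_inj.mp g2)
          subst hyy
          have haa : a = a' := opF_det hop hop'
          subst haa
          have := ih r' u y hy hy'
          rw [this]

/-! ### Bridge: mono acts on basis vectors via `F` -/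

theorem sR_single (u : List Bool) : sR (Finsupp.single u (1:ℚ)) = toV (sF u) := by
  rw [sR, Finsupp.linearCombination_single, one_smul, Sfun_eq]

theorem tR_single (u : List Bool) : tR (Finsupp.single u (1:ℚ)) = toV (tF u) := by
  rw [tR, Finsupp.linearCombination_single, one_smul, Tfun_eq]

theorem mono_single : ∀ (w u : List Bool),
    mono w (Finsupp.single u (1:ℚ)) = toV (F w u) := by
  intro w
  induction w with
  | nil => intro u; rfl
  | cons a w ih =>
      intro u
      have hm : mono (a :: w) = (if a then tR else sR) * mono w := by
        simp [mono]
      rw [hm, Module.End.mul_apply, ih,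
          show F (a :: w) u = (F w u).bind (opF a) from rfl]
      cases h : F w u with
      | none =>
          cases a <;> simp [toV]
      | some y =>
          cases a
          · exact sR_single y
          · exact tR_single y

theorem mono_ne_zero_exists {w : List Bool} (h : mono w ≠ 0) :
    ∃ u z, F w u = some z := by
  by_contra hc
  push_neg at hc
  apply h
  apply Finsupp.lhom_ext
  intro a b
  have hnone : F w a = none := by
    cases hF : F w a with
    | none => rfl
    | some z => exact absurd hF (hc a z)
  have hz : mono w (Finsupp.single a 1) = 0 := by
    rw [mono_single, hnone]; rfl
  calc mono w (Finsupp.single a b) = mono w (b • Finsupp.single a 1) := by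
        rw [Finsupp.smul_single, smul_eq_mul, mul_one]
    _ = b • mono w (Finsupp.single a 1) := map_smul _ _ _
    _ = 0 := by rw [hz, smul_zero]
    _ = (0 : Module.End ℚ V) (Finsupp.single a b) := by simp

end

noncomputable section

/-- `R₂` is a monomial ring: formally distinct nonzero monomials are `ℤ`-linearly
independent, and in particular `R₂` is torsion-free as an additive group. -/
theorem monomial_ring :
    (∀ (k : ℕ) (v : Fin k → List Bool) (n : Fin k → ℤ),
      (∀ i, v i ≠ []) → (∀ i, mono (v i) ≠ 0) → Function.Injective v →
      (∑ i, n i • mono (v i)) = 0 → ∀ i, n i = 0) ∧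
    (∀ x ∈ R2, ∀ n : ℤ, n ≠ 0 → n • x = 0 → x = 0) := by
  constructor
  · intro k v n hne hnz hinj hsum i
    obtain ⟨u, z, huz⟩ := mono_ne_zero_exists (hnz i)
    have hsum' : (∑ j, ((n j : ℚ)) • mono (v j)) = 0 := by
      rw [← hsum]
      exact Finset.sum_congr rfl fun j _ => Int.cast_smul_eq_zsmul ℚ (n j) (mono (v j))
    have h1 : (∑ j, ((n j : ℚ)) • mono (v j)) (Finsupp.single u 1) = 0 := by
      rw [hsum']; rfl
    rw [LinearMap.sum_apply] at h1
    have h2 : (∑ j, ((n j : ℚ)) • (mono (v j) (Finsupp.single u 1))) = (0:V) := by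
      simpa [LinearMap.smul_apply] using h1
    have h3 : (∑ j, ((n j : ℚ)) • ((toV (F (v j) u)) z)) = (0:ℚ) := by
      have := congrArg (fun f : V => f z) h2
      simpa [Finsupp.finset_sum_apply, Finsupp.smul_apply, mono_single] using this
    have hsingle : ∀ j ∈ Finset.univ, j ≠ i → ((n j : ℚ)) • ((toV (F (v j) u)) z) = 0 := by
      intro j _ hj
      cases hF : F (v j) u with
      | none => simp [toV]
      | some z' =>
          have hzz : z' ≠ z := by
            intro hc; subst hc
            exact hj (hinj (F_word_inj (v j) (v i) u z' hF huz))
          simp [toV, Finsupp.single_eq_of_ne' hzz]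
    have h4 : ((n i : ℚ)) • ((toV (F (v i) u)) z) = 0 := by
      rw [← Finset.sum_eq_single i hsingle (fun h => absurd (Finset.mem_univ i) h)]
      exact h3
    rw [huz] at h4
    have h5 : (n i : ℚ) = 0 := by
      simpa [toV, Finsupp.single_eq_same] using h4
    exact_mod_cast h5
  · intro x _ m hm h
    have h' : ((m : ℚ)) • x = 0 := by rw [Int.cast_smul_eq_zsmul ℚ m x]; exact h
    have hmq : (m : ℚ) ≠ 0 := Int.cast_ne_zero.mpr hm
    calc x = (m:ℚ)⁻¹ • ((m:ℚ) • x) := by rw [smul_smul, inv_mul_cancel₀ hmq, one_smul]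
      _ = 0 := by rw [h', smul_zero]

end
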